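/- arXiv:2503.01514 — 2 statements merged into one kernel-verified Lean document; each statement's English description precedes it below -/
import Mathlib

section
/- Under the repeated random objects model, the estimator σ̂_j² = (1/N_j)·Σ_{i∈G_j}(Σ_{l=1}^{r_i} d²(μ̂_j,Y_{il}))² − ((Σ_{i∈G_j} r_i²)/N_j)·V̂_j² converges in probability, as n → ∞, to σ_j² = Var(d²(μ_j,Y_{il})) + (a_r − 1)·Cov(d²(μ_j,Y_{il}), d²(μ_j,Y_{ik})) for l ≠ k, i ∈ G_j; i.e., σ̂_j² is a consistent estimator of the asymptotic variance of N_j^{1/2}·V̂_j. -/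
open MeasureTheory ProbabilityTheory Filter Finset

/-- The covariance of two real-valued random variables. -/
noncomputable def cov {α : Type*} [MeasurableSpace α] (P : Measure α) (X Y : α → ℝ) : ℝ :=
  ∫ a, (X a - ∫ a', X a' ∂P) * (Y a - ∫ a', Y a' ∂P) ∂P

section AuxMarg
variable {M : Type} [MeasurableSpace M]
  (κ : (s : ℕ) → Measure (Fin s → M))

lemma meas_comp_perm (s : ℕ) (σ : Equiv.Perm (Fin s)) :
    Measurable (fun x : Fin s → M => x ∘ ⇑σ) :=
  measurable_pi_lambda _ (fun j => measurable_pi_apply (σ j))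

lemma perm_eval (hexch : ∀ (s : ℕ) (σ : Equiv.Perm (Fin s)), (κ s).map (fun x => x ∘ σ) = κ s)
    (s : ℕ) (σ : Equiv.Perm (Fin s)) (l : Fin s) :
    (κ s).map (fun x => x (σ l)) = (κ s).map (fun x => x l) := by
  conv_rhs => rw [← hexch s σ]
  rw [Measure.map_map (measurable_pi_apply l) (meas_comp_perm s σ)]
  rfl

lemma perm_eval2 (hexch : ∀ (s : ℕ) (σ : Equiv.Perm (Fin s)), (κ s).map (fun x => x ∘ σ) = κ s)
    (s : ℕ) (σ : Equiv.Perm (Fin s)) (l k : Fin s) :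
    (κ s).map (fun x => (x (σ l), x (σ k))) = (κ s).map (fun x => (x l, x k)) := by
  conv_rhs => rw [← hexch s σ]
  rw [Measure.map_map ((measurable_pi_apply l).prodMk (measurable_pi_apply k))
    (meas_comp_perm s σ)]
  rfl

lemma marg_zero (hconsis : ∀ s : ℕ, (κ (s+1)).map (fun x (j : Fin s) => x j.castSucc) = κ s) :
    ∀ s : ℕ, (κ (s+1)).map (fun x => x 0) = (κ 1).map (fun x => x 0) := by
  intro s
  induction s with
  | zero => rfl
  | succ t ih =>
    rw [← ih, ← hconsis (t+1)]
    rw [Measure.map_map (measurable_pi_apply 0)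
      (measurable_pi_lambda _ (fun j => measurable_pi_apply j.castSucc))]
    rfl

lemma marg_one (hexch : ∀ (s : ℕ) (σ : Equiv.Perm (Fin s)), (κ s).map (fun x => x ∘ σ) = κ s)
    (hconsis : ∀ s : ℕ, (κ (s+1)).map (fun x (j : Fin s) => x j.castSucc) = κ s)
    (s : ℕ) (l : Fin s) :
    (κ s).map (fun x => x l) = (κ 1).map (fun x => x 0) := by
  match s, l with
  | (t+1), l =>
    have h := perm_eval κ hexch (t+1) (Equiv.swap 0 l) l
    rw [Equiv.swap_apply_right] at h
    rw [← h, marg_zero κ hconsis t]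

lemma marg_zero_one
    (hconsis : ∀ s : ℕ, (κ (s+1)).map (fun x (j : Fin s) => x j.castSucc) = κ s) :
    ∀ s : ℕ, (κ (s+2)).map (fun x => (x 0, x 1)) = (κ 2).map (fun x => (x 0, x 1)) := by
  intro s
  induction s with
  | zero => rfl
  | succ t ih =>
    rw [← ih, ← hconsis (t+2)]
    rw [Measure.map_map ((measurable_pi_apply 0).prodMk (measurable_pi_apply 1))
      (measurable_pi_lambda _ (fun j => measurable_pi_apply j.castSucc))]
    rfl

lemma marg_two (hexch : ∀ (s : ℕ) (σ : Equiv.Perm (Fin s)), (κ s).map (fun x => x ∘ σ) = κ s)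
    (hconsis : ∀ s : ℕ, (κ (s+1)).map (fun x (j : Fin s) => x j.castSucc) = κ s)
    (s : ℕ) (l k : Fin s) (hlk : l ≠ k) :
    (κ s).map (fun x => (x l, x k)) = (κ 2).map (fun x => (x 0, x 1)) := by
  match s, l, k with
  | 1, l, k => exact absurd (Subsingleton.elim l k) hlk
  | (t+2), l, k =>
    set τ : Equiv.Perm (Fin (t+2)) := Equiv.swap 0 l with hτ
    have hj : τ k ≠ 0 := by
      intro h
      have h2 : k = τ 0 := by
        have := congrArg τ h
        rwa [hτ, Equiv.swap_apply_self] at this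
      rw [hτ, Equiv.swap_apply_left] at h2
      exact hlk h2.symm
    set π : Equiv.Perm (Fin (t+2)) := (Equiv.swap 1 (τ k)).trans τ with hπ
    have hπ0 : π 0 = l := by
      simp only [hπ, Equiv.trans_apply]
      rw [Equiv.swap_apply_of_ne_of_ne (by norm_num) (Ne.symm hj)]
      simp [hτ]
    have hπ1 : π 1 = k := by
      simp only [hπ, Equiv.trans_apply, Equiv.swap_apply_left]
      simp [hτ, Equiv.swap_apply_self]
    have h := perm_eval2 κ hexch (t+2) π 0 1
    rw [hπ0, hπ1] at h
    rw [h]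
    exact marg_zero_one κ hconsis t

lemma marg_one' (hmarg : ∀ (s : ℕ) (l : Fin s), (κ s).map (fun x => x l) = (κ 1).map (fun x => x 0))
    (s : ℕ) (l : Fin s) (f : M → ℝ) (hf : Measurable f) :
    ∫ x, f (x l) ∂κ s = ∫ x, f (x 0) ∂κ 1 := by
  have h1 : ∫ x, f (x l) ∂κ s = ∫ y, f y ∂((κ s).map (fun x => x l)) :=
    (integral_map (measurable_pi_apply l).aemeasurable hf.aestronglyMeasurable).symm
  rw [h1, hmarg s l,
    integral_map (measurable_pi_apply 0).aemeasurable hf.aestronglyMeasurable]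

lemma marg_two' (hmarg : ∀ (s : ℕ) (l k : Fin s), l ≠ k →
      (κ s).map (fun x => (x l, x k)) = (κ 2).map (fun x => (x 0, x 1)))
    (s : ℕ) (l k : Fin s) (hlk : l ≠ k) (f g : M → ℝ) (hf : Measurable f) (hg : Measurable g) :
    ∫ x, f (x l) * g (x k) ∂κ s = ∫ x, f (x 0) * g (x 1) ∂κ 2 := by
  have hφ : Measurable (fun p : M × M => f p.1 * g p.2) :=
    (hf.comp measurable_fst).mul (hg.comp measurable_snd)
  have h1 : ∫ x, f (x l) * g (x k) ∂κ s
      = ∫ p, f p.1 * g p.2 ∂((κ s).map (fun x => (x l, x k))) :=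
    (integral_map (φ := fun x : Fin s → M => (x l, x k)) (f := fun p : M × M => f p.1 * g p.2)
      ((measurable_pi_apply l).prodMk (measurable_pi_apply k)).aemeasurable
      hφ.aestronglyMeasurable).symm
  rw [h1, hmarg s l k hlk,
    integral_map ((measurable_pi_apply 0).prodMk (measurable_pi_apply 1)).aemeasurable
      hφ.aestronglyMeasurable]

end AuxMarg

lemma integrable_of_bdd {α : Type*} [MeasurableSpace α] (P : Measure α) [IsProbabilityMeasure P]
    {f : α → ℝ} (hf : Measurable f) (c : ℝ) (hb : ∀ x, |f x| ≤ c) : Integrable f P :=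
  (memLp_top_of_bound hf.aestronglyMeasurable c
    (Filter.Eventually.of_forall fun x => by simpa using hb x)).integrable le_top

lemma memL2_of_bdd {α : Type*} [MeasurableSpace α] (P : Measure α) [IsProbabilityMeasure P]
    {f : α → ℝ} (hf : Measurable f) (c : ℝ) (hb : ∀ x, |f x| ≤ c) : MemLp f 2 P :=
  (memLp_top_of_bound hf.aestronglyMeasurable c
    (Filter.Eventually.of_forall fun x => by simpa using hb x)).mono_exponent le_top

lemma cov_eq {α : Type*} [MeasurableSpace α] (P : Measure α) [IsProbabilityMeasure P]
    (X Y : α → ℝ) (hX : Measurable X) (hY : Measurable Y) (cX cY : ℝ)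
    (hXb : ∀ a, |X a| ≤ cX) (hYb : ∀ a, |Y a| ≤ cY) :
    cov P X Y = (∫ a, X a * Y a ∂P) - (∫ a, X a ∂P) * (∫ a, Y a ∂P) := by
  have iX : Integrable X P := integrable_of_bdd P hX cX hXb
  have iY : Integrable Y P := integrable_of_bdd P hY cY hYb
  have iXY : Integrable (fun a => X a * Y a) P := by
    refine integrable_of_bdd P (hX.mul hY) (cX * cY) (fun a => ?_)
    rw [abs_mul]
    exact mul_le_mul (hXb a) (hYb a) (abs_nonneg _) (le_trans (abs_nonneg (X a)) (hXb a))
  unfold cov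
  set mx := ∫ a, X a ∂P with hmx
  set my := ∫ a, Y a ∂P with hmy
  have h : ∀ a, (X a - mx) * (Y a - my) = X a * Y a - mx * Y a - my * X a + mx * my :=
    fun a => by ring
  rw [integral_congr_ae (Filter.Eventually.of_forall h)]
  have i1 : Integrable (fun a => X a * Y a - mx * Y a) P := iXY.sub (iY.const_mul mx)
  have i2 : Integrable (fun a => X a * Y a - mx * Y a - my * X a) P := i1.sub (iX.const_mul my)
  rw [integral_add i2 (integrable_const _),
    integral_sub i1 (iX.const_mul my),
    integral_sub iXY (iY.const_mul mx),
    integral_const_mul, integral_const_mul, integral_const]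
  simp only [probReal_univ, smul_eq_mul, one_mul]
  ring

lemma subject_moments {M Ωn : Type} [MeasurableSpace M]
    [MeasurableSpace Ωn] (P : Measure Ωn) [IsProbabilityMeasure P]
    (κ : (s : ℕ) → Measure (Fin s → M)) (hκ : ∀ s, IsProbabilityMeasure (κ s))
    (hmarg1 : ∀ (s : ℕ) (l : Fin s), (κ s).map (fun x => x l) = (κ 1).map (fun x => x 0))
    (hmarg2 : ∀ (s : ℕ) (l k : Fin s), l ≠ k →
      (κ s).map (fun x => (x l, x k)) = (κ 2).map (fun x => (x 0, x 1)))
    (s : ℕ) (Z : Ωn → Fin s → M) (hZ : Measurable Z) (hlaw : P.map Z = κ s)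
    (f : M → ℝ) (hf : Measurable f) (c : ℝ) (hfb : ∀ y, |f y| ≤ c) :
    (∫ ω, (∑ l, f (Z ω l)) ∂P = (s : ℝ) * ∫ x, f (x 0) ∂κ 1) ∧
    (∫ ω, (∑ l, f (Z ω l))^2 ∂P
      = (s : ℝ) * ∫ x, f (x 0)^2 ∂κ 1
        + ((s : ℝ)^2 - s) * ∫ x, f (x 0) * f (x 1) ∂κ 2) := by
  haveI := hκ s; haveI := hκ 1; haveI := hκ 2
  have hint : ∀ g : (Fin s → M) → ℝ, Measurable g → ∫ ω, g (Z ω) ∂P = ∫ x, g x ∂κ s := by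
    intro g hg
    rw [← hlaw, integral_map hZ.aemeasurable hg.aestronglyMeasurable]
  have hZl : ∀ l, Measurable (fun ω => Z ω l) := fun l => (measurable_pi_apply l).comp hZ
  constructor
  · have h1 : ∫ ω, (∑ l, f (Z ω l)) ∂P = ∑ l, ∫ ω, f (Z ω l) ∂P := by
      apply integral_finset_sum
      intro l _
      exact integrable_of_bdd P (hf.comp (hZl l)) c (fun ω => hfb _)
    rw [h1]
    have h2 : ∀ l : Fin s, ∫ ω, f (Z ω l) ∂P = ∫ x, f (x 0) ∂κ 1 := by
      intro l
      rw [hint (fun x => f (x l)) (hf.comp (measurable_pi_apply l))]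
      exact marg_one' κ hmarg1 s l f hf
    rw [Finset.sum_congr rfl (fun l _ => h2 l)]
    simp [mul_comm]
  · have hexp : ∀ ω, (∑ l, f (Z ω l))^2 = ∑ l, ∑ k, f (Z ω l) * f (Z ω k) := by
      intro ω
      rw [sq, Finset.sum_mul_sum]
    have hprod : ∀ l k : Fin s, Integrable (fun ω => f (Z ω l) * f (Z ω k)) P := by
      intro l k
      refine integrable_of_bdd P ?_ (c * c) ?_
      · exact (hf.comp (hZl l)).mul (hf.comp (hZl k))
      · intro ω
        rw [abs_mul]
        exact mul_le_mul (hfb _) (hfb _) (abs_nonneg _)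
          (le_trans (abs_nonneg (f (Z ω l))) (hfb (Z ω l)))
    have h1 : ∫ ω, (∑ l, f (Z ω l))^2 ∂P = ∑ l, ∑ k, ∫ ω, f (Z ω l) * f (Z ω k) ∂P := by
      rw [integral_congr_ae (Filter.Eventually.of_forall hexp)]
      rw [integral_finset_sum (μ := P) Finset.univ
        (f := fun l ω => ∑ k, f (Z ω l) * f (Z ω k))
        (fun l _ => integrable_finset_sum _ (fun k _ => hprod l k))]
      exact Finset.sum_congr rfl (fun l _ => integral_finset_sum _ (fun k _ => hprod l k))
    rw [h1]
    set M2 : ℝ := ∫ x, f (x 0)^2 ∂κ 1 with hM2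
    set M11 : ℝ := ∫ x, f (x 0) * f (x 1) ∂κ 2 with hM11
    have h2 : ∀ l k : Fin s, ∫ ω, f (Z ω l) * f (Z ω k) ∂P = if l = k then M2 else M11 := by
      intro l k
      rw [hint (fun x => f (x l) * f (x k))
        ((hf.comp (measurable_pi_apply l)).mul (hf.comp (measurable_pi_apply k)))]
      by_cases hlk : l = k
      · subst hlk
        simp only [if_true]
        have : ∀ x : Fin s → M, f (x l) * f (x l) = (fun y => f y ^ 2) (x l) := by
          intro x; simp [sq]
        rw [integral_congr_ae (Filter.Eventually.of_forall this)]
        exact marg_one' κ hmarg1 s l (fun y => f y ^ 2) (hf.pow_const 2)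
      · rw [if_neg hlk]
        exact marg_two' κ hmarg2 s l k hlk f f hf hf
    rw [Finset.sum_congr rfl (fun l _ => Finset.sum_congr rfl (fun k _ => h2 l k))]
    have h3 : ∀ l : Fin s, ∑ k : Fin s, (if l = k then M2 else M11)
        = (s : ℝ) * M11 + (M2 - M11) := by
      intro l
      have : ∀ k : Fin s, (if l = k then M2 else M11)
          = M11 + (if l = k then M2 - M11 else 0) := by
        intro k; split <;> ring
      rw [Finset.sum_congr rfl (fun k _ => this k), Finset.sum_add_distrib,
        Finset.sum_const, Finset.sum_ite_eq _ _ (fun _ => M2 - M11)]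
      simp [mul_comm]
    rw [Finset.sum_congr rfl (fun l _ => h3 l), Finset.sum_const]
    simp only [card_univ, Fintype.card_fin, nsmul_eq_mul]
    ring

lemma var_le_of_bdd {Ωn : Type} [MeasurableSpace Ωn] (P : Measure Ωn) [IsProbabilityMeasure P]
    {f : Ωn → ℝ} (hf : Measurable f) (K : ℝ) (hb : ∀ x, |f x| ≤ K) :
    variance f P ≤ K ^ 2 := by
  refine (variance_le_expectation_sq (μ := P) hf.aestronglyMeasurable).trans ?_
  have hpt : ∀ ω, (f ^ 2) ω ≤ K ^ 2 := by
    intro ω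
    have h2 : |f ω| ^ 2 ≤ K ^ 2 := pow_le_pow_left₀ (abs_nonneg _) (hb ω) 2
    calc (f ^ 2) ω = |f ω| ^ 2 := by rw [Pi.pow_apply, sq_abs]
      _ ≤ K ^ 2 := h2
  have hint : Integrable (f ^ 2) P := by
    refine integrable_of_bdd P (hf.pow_const 2) (K ^ 2) (fun ω => ?_)
    have h0 : (0:ℝ) ≤ (f ^ 2) ω := by simp [Pi.pow_apply, sq_nonneg]
    rw [abs_of_nonneg h0]; exact hpt ω
  calc ∫ x, (f ^ 2) x ∂P ≤ ∫ _x, K ^ 2 ∂P := integral_mono hint (integrable_const _) hpt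
    _ = K ^ 2 := by simp

/-- Chebyshev bound for the scaled sum of independent, uniformly bounded variables. -/
lemma cheb_avg {Ωn : Type} [MeasurableSpace Ωn] (P : Measure Ωn) [IsProbabilityMeasure P]
    (mn : ℕ) (T : Fin mn → Ωn → ℝ) (hTmeas : ∀ i, Measurable (T i))
    (K : ℝ) (hTb : ∀ i ω, |T i ω| ≤ K)
    (hTindep : ∀ i j : Fin mn, i ≠ j → IndepFun (T i) (T j) P)
    (c : ℝ) (hc : 0 < c) (NR : ℝ) (hNR : 1 ≤ NR) (hmN : (mn : ℝ) ≤ NR) :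
    P {ω | c ≤ |(1 / NR) * ∑ i, T i ω
        - ∫ x, (1 / NR) * ∑ i, T i x ∂P|}
      ≤ ENNReal.ofReal ((K ^ 2 / NR) / c ^ 2) := by
  have hNR0 : (0:ℝ) < NR := lt_of_lt_of_le one_pos hNR
  set X : Ωn → ℝ := fun ω => (1 / NR) * ∑ i, T i ω with hX
  have hXmeas : Measurable X := (Finset.measurable_sum _ (fun i _ => hTmeas i)).const_mul _
  have hXb : ∀ ω, |X ω| ≤ (mn : ℝ) * K := by
    intro ω
    have h1 : |∑ i, T i ω| ≤ (mn : ℝ) * K := by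
      refine (Finset.abs_sum_le_sum_abs _ _).trans ?_
      calc ∑ i, |T i ω| ≤ ∑ _i : Fin mn, K := Finset.sum_le_sum fun i _ => hTb i ω
        _ = (mn : ℝ) * K := by simp [mul_comm]
    calc |X ω| = (1 / NR) * |∑ i, T i ω| := by
          rw [hX, abs_mul, abs_of_nonneg (by positivity : (0:ℝ) ≤ 1 / NR)]
      _ ≤ 1 * ((mn : ℝ) * K) :=
          mul_le_mul (by rw [div_le_one hNR0]; exact hNR) h1 (abs_nonneg _) (by norm_num)
      _ = (mn : ℝ) * K := one_mul _
  have hXL2 : MemLp X 2 P := memL2_of_bdd P hXmeas _ hXb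
  have hvar : variance X P ≤ K ^ 2 / NR := by
    have hfun : X = (1 / NR) • (∑ i, T i) := by
      ext ω
      simp [hX, Finset.sum_apply, smul_eq_mul]
    rw [hfun, variance_smul]
    have hvs : variance (∑ i, T i) P = ∑ i, variance (T i) P :=
      IndepFun.variance_sum (fun i _ => memL2_of_bdd P (hTmeas i) K (hTb i))
        (fun i _ j _ hij => hTindep i j hij)
    rw [hvs]
    have hsum : ∑ i, variance (T i) P ≤ (mn : ℝ) * K ^ 2 := by
      calc ∑ i, variance (T i) P ≤ ∑ _i : Fin mn, K ^ 2 :=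
          Finset.sum_le_sum fun i _ => var_le_of_bdd P (hTmeas i) K (hTb i)
        _ = (mn : ℝ) * K ^ 2 := by simp [mul_comm]
    calc (1 / NR) ^ 2 * ∑ i, variance (T i) P ≤ (1 / NR) ^ 2 * ((mn : ℝ) * K ^ 2) :=
        mul_le_mul_of_nonneg_left hsum (by positivity)
      _ ≤ (1 / NR) ^ 2 * (NR * K ^ 2) := by
          apply mul_le_mul_of_nonneg_left ?_ (by positivity)
          exact mul_le_mul_of_nonneg_right hmN (by positivity)
      _ = K ^ 2 / NR := by field_simp
  have hbound := meas_ge_le_variance_div_sq (μ := P) hXL2 hc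
  refine hbound.trans (ENNReal.ofReal_le_ofReal ?_)
  gcongr

lemma sq_dist_diff {M : Type} [MetricSpace M] (w ν y : M) (D : ℝ)
    (hdist : ∀ x z : M, dist x z ≤ D) :
    |dist w y ^ 2 - dist ν y ^ 2| ≤ 2 * D * dist w ν := by
  have e : dist w y ^ 2 - dist ν y ^ 2 = (dist w y - dist ν y) * (dist w y + dist ν y) := by ring
  rw [e, abs_mul]
  have h1 : |dist w y - dist ν y| ≤ dist w ν := abs_dist_sub_le w ν y
  have h2 : |dist w y + dist ν y| ≤ 2 * D := by
    rw [abs_of_nonneg (add_nonneg dist_nonneg dist_nonneg)]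
    linarith [hdist w y, hdist ν y]
  calc |dist w y - dist ν y| * |dist w y + dist ν y| ≤ dist w ν * (2 * D) :=
      mul_le_mul h1 h2 (abs_nonneg _) dist_nonneg
    _ = 2 * D * dist w ν := by ring

lemma lipschitz_step (mn : ℕ) (rr : Fin mn → ℕ) (NR : ℝ) (hNR : 1 ≤ NR)
    (hNRsum : ∑ i, (rr i : ℝ) = NR)
    (C₀ : ℝ) (hC₀ : 1 ≤ C₀) (hrle : ∀ i, (rr i : ℝ) ≤ C₀)
    (D d : ℝ) (hD : 1 ≤ D) (hd : 0 ≤ d)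
    (a b : Fin mn → ℝ)
    (hab : ∀ i, |a i - b i| ≤ (rr i : ℝ) * (2 * D * d))
    (ha0 : ∀ i, 0 ≤ a i) (haU : ∀ i, a i ≤ (rr i : ℝ) * D ^ 2)
    (hb0 : ∀ i, 0 ≤ b i) (hbU : ∀ i, b i ≤ (rr i : ℝ) * D ^ 2) :
    |((1 / NR) * ∑ i, (a i) ^ 2 - ((∑ i, (rr i : ℝ) ^ 2) / NR) * ((1 / NR) * ∑ i, a i) ^ 2)
      - ((1 / NR) * ∑ i, (b i) ^ 2 - ((∑ i, (rr i : ℝ) ^ 2) / NR) * ((1 / NR) * ∑ i, b i) ^ 2)|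
      ≤ 8 * C₀ * D ^ 3 * d := by
  have hNR0 : 0 < NR := lt_of_lt_of_le one_pos hNR
  have hD0 : (0:ℝ) < D := lt_of_lt_of_le one_pos hD
  set B : ℝ := (∑ i, (rr i : ℝ) ^ 2) / NR with hB
  have hsum2 : ∑ i, (rr i : ℝ) ^ 2 ≤ C₀ * NR := by
    rw [← hNRsum, Finset.mul_sum]
    apply Finset.sum_le_sum
    intro i _
    rw [sq]
    exact mul_le_mul_of_nonneg_right (hrle i) (Nat.cast_nonneg _)
  have hB0 : 0 ≤ B := div_nonneg (Finset.sum_nonneg fun i _ => sq_nonneg _) hNR0.le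
  have hBC : B ≤ C₀ := by
    rw [hB, div_le_iff₀ hNR0]
    exact hsum2
  have h1 : |(1 / NR) * ∑ i, (a i) ^ 2 - (1 / NR) * ∑ i, (b i) ^ 2| ≤ 4 * C₀ * D ^ 3 * d := by
    rw [← mul_sub, ← Finset.sum_sub_distrib, abs_mul]
    have habs : |∑ i, ((a i) ^ 2 - (b i) ^ 2)| ≤ ∑ i, (rr i : ℝ) ^ 2 * (4 * D ^ 3 * d) := by
      refine (Finset.abs_sum_le_sum_abs _ _).trans (Finset.sum_le_sum ?_)
      intro i _
      have e : (a i) ^ 2 - (b i) ^ 2 = (a i - b i) * (a i + b i) := by ring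
      rw [e, abs_mul]
      have h2 : |a i + b i| ≤ (rr i : ℝ) * (2 * D ^ 2) := by
        rw [abs_of_nonneg (add_nonneg (ha0 i) (hb0 i))]
        calc a i + b i ≤ (rr i : ℝ) * D ^ 2 + (rr i : ℝ) * D ^ 2 := add_le_add (haU i) (hbU i)
          _ = (rr i : ℝ) * (2 * D ^ 2) := by ring
      calc |a i - b i| * |a i + b i|
          ≤ ((rr i : ℝ) * (2 * D * d)) * ((rr i : ℝ) * (2 * D ^ 2)) :=
            mul_le_mul (hab i) h2 (abs_nonneg _)
              (mul_nonneg (Nat.cast_nonneg _) (by positivity))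
        _ = (rr i : ℝ) ^ 2 * (4 * D ^ 3 * d) := by ring
    calc |1 / NR| * |∑ i, ((a i) ^ 2 - (b i) ^ 2)|
        ≤ (1 / NR) * (∑ i, (rr i : ℝ) ^ 2 * (4 * D ^ 3 * d)) := by
          rw [abs_of_nonneg (by positivity : (0:ℝ) ≤ 1 / NR)]
          exact mul_le_mul_of_nonneg_left habs (by positivity)
      _ = (∑ i, (rr i : ℝ) ^ 2) * (4 * D ^ 3 * d) / NR := by
          rw [← Finset.sum_mul]; ring
      _ ≤ (C₀ * NR) * (4 * D ^ 3 * d) / NR := by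
          gcongr
      _ = 4 * C₀ * D ^ 3 * d := by field_simp
  have hVa0 : 0 ≤ (1 / NR) * ∑ i, a i :=
    mul_nonneg (by positivity) (Finset.sum_nonneg fun i _ => ha0 i)
  have hVb0 : 0 ≤ (1 / NR) * ∑ i, b i :=
    mul_nonneg (by positivity) (Finset.sum_nonneg fun i _ => hb0 i)
  have hVaU : (1 / NR) * ∑ i, a i ≤ D ^ 2 := by
    have : ∑ i, a i ≤ NR * D ^ 2 := by
      rw [← hNRsum, Finset.sum_mul]
      exact Finset.sum_le_sum fun i _ => haU i
    calc (1 / NR) * ∑ i, a i ≤ (1 / NR) * (NR * D ^ 2) :=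
        mul_le_mul_of_nonneg_left this (by positivity)
      _ = D ^ 2 := by field_simp
  have hVbU : (1 / NR) * ∑ i, b i ≤ D ^ 2 := by
    have : ∑ i, b i ≤ NR * D ^ 2 := by
      rw [← hNRsum, Finset.sum_mul]
      exact Finset.sum_le_sum fun i _ => hbU i
    calc (1 / NR) * ∑ i, b i ≤ (1 / NR) * (NR * D ^ 2) :=
        mul_le_mul_of_nonneg_left this (by positivity)
      _ = D ^ 2 := by field_simp
  have hVdiff : |(1 / NR) * ∑ i, a i - (1 / NR) * ∑ i, b i| ≤ 2 * D * d := by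
    rw [← mul_sub, ← Finset.sum_sub_distrib, abs_mul]
    have hs : |∑ i, (a i - b i)| ≤ NR * (2 * D * d) := by
      refine (Finset.abs_sum_le_sum_abs _ _).trans ?_
      rw [← hNRsum, Finset.sum_mul]
      exact Finset.sum_le_sum fun i _ => hab i
    have habs1 : |1 / NR| = 1 / NR := abs_of_nonneg (by positivity)
    calc |1 / NR| * |∑ i, (a i - b i)| ≤ (1 / NR) * (NR * (2 * D * d)) := by
          rw [habs1]
          exact mul_le_mul_of_nonneg_left hs (by positivity)
      _ = 2 * D * d := by
          rw [one_div, inv_mul_cancel_left₀ hNR0.ne']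
  have h2 : |B * ((1 / NR) * ∑ i, a i) ^ 2 - B * ((1 / NR) * ∑ i, b i) ^ 2|
      ≤ 4 * C₀ * D ^ 3 * d := by
    rw [← mul_sub, abs_mul, abs_of_nonneg hB0]
    have e : ((1 / NR) * ∑ i, a i) ^ 2 - ((1 / NR) * ∑ i, b i) ^ 2
        = ((1 / NR) * ∑ i, a i - (1 / NR) * ∑ i, b i)
          * ((1 / NR) * ∑ i, a i + (1 / NR) * ∑ i, b i) := by ring
    rw [e, abs_mul]
    have hplus : |(1 / NR) * ∑ i, a i + (1 / NR) * ∑ i, b i| ≤ 2 * D ^ 2 := by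
      rw [abs_of_nonneg (add_nonneg hVa0 hVb0)]
      calc (1 / NR) * ∑ i, a i + (1 / NR) * ∑ i, b i ≤ D ^ 2 + D ^ 2 := add_le_add hVaU hVbU
        _ = 2 * D ^ 2 := by ring
    calc B * (|(1 / NR) * ∑ i, a i - (1 / NR) * ∑ i, b i|
          * |(1 / NR) * ∑ i, a i + (1 / NR) * ∑ i, b i|)
        ≤ C₀ * ((2 * D * d) * (2 * D ^ 2)) := by
          apply mul_le_mul hBC ?_ (mul_nonneg (abs_nonneg _) (abs_nonneg _))
            (le_trans zero_le_one hC₀)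
          exact mul_le_mul hVdiff hplus (abs_nonneg _) (by positivity)
      _ = 4 * C₀ * D ^ 3 * d := by ring
  have e : ((1 / NR) * ∑ i, (a i) ^ 2 - B * ((1 / NR) * ∑ i, a i) ^ 2)
        - ((1 / NR) * ∑ i, (b i) ^ 2 - B * ((1 / NR) * ∑ i, b i) ^ 2)
      = ((1 / NR) * ∑ i, (a i) ^ 2 - (1 / NR) * ∑ i, (b i) ^ 2)
        - (B * ((1 / NR) * ∑ i, a i) ^ 2 - B * ((1 / NR) * ∑ i, b i) ^ 2) := by ring
  rw [e]
  calc |((1 / NR) * ∑ i, (a i) ^ 2 - (1 / NR) * ∑ i, (b i) ^ 2)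
        - (B * ((1 / NR) * ∑ i, a i) ^ 2 - B * ((1 / NR) * ∑ i, b i) ^ 2)|
      ≤ |(1 / NR) * ∑ i, (a i) ^ 2 - (1 / NR) * ∑ i, (b i) ^ 2|
        + |B * ((1 / NR) * ∑ i, a i) ^ 2 - B * ((1 / NR) * ∑ i, b i) ^ 2| := abs_sub _ _
    _ ≤ 4 * C₀ * D ^ 3 * d + 4 * C₀ * D ^ 3 * d := add_le_add h1 h2
    _ = 8 * C₀ * D ^ 3 * d := by ring

/-- **Consistency of the variance estimator `σ̂_j²` (Theorem 1, first part).**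
For a single group of subjects carrying exchangeable repeated random objects in a bounded
metric space, under Condition 1 (existence, uniqueness and separation of the Fréchet means),
Condition 2 (bounded numbers of repeats and `N_j → ∞`), existence of
`a_r = lim Σ_i r_i²/N_j`, and consistency of the sample Fréchet mean,
the estimator
`σ̂_j² = (1/N_j) Σ_i (Σ_l d²(μ̂_j,Y_{il}))² − (Σ_i r_i²/N_j)·V̂_j²`
converges in probability to
`σ_j² = Var(d²(μ_j,Y_{il})) + (a_r − 1)·Cov(d²(μ_j,Y_{il}), d²(μ_j,Y_{ik}))`, `l ≠ k`. -/
theorem sigma_hat_consistent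
    (M : Type) [MetricSpace M] [MeasurableSpace M] [BorelSpace M]
    (hMbdd : Bornology.IsBounded (Set.univ : Set M))
    (Ω : ℕ → Type) [∀ n, MeasurableSpace (Ω n)]
    (P : ∀ n, Measure (Ω n)) [∀ n, IsProbabilityMeasure (P n)]
    (m : ℕ → ℕ) (r : (n : ℕ) → Fin (m n) → ℕ) (hr : ∀ n i, 1 ≤ r n i)
    -- Condition 2: bounded numbers of repeats, and N_j → ∞
    (C₀ : ℕ) (hrbdd : ∀ n i, r n i ≤ C₀)
    (hN : Tendsto (fun n => ∑ i, r n i) atTop atTop)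
    (Y : (n : ℕ) → (i : Fin (m n)) → Fin (r n i) → Ω n → M)
    (hYmeas : ∀ n i l, Measurable (Y n i l))
    -- observations from different subjects are independent
    (hindep : ∀ n, iIndepFun
      (fun (i : Fin (m n)) (ω : Ω n) (l : Fin (r n i)) => Y n i l ω) (P n))
    -- within-subject joint laws: exchangeable, identical across subjects and stages
    (κ : (s : ℕ) → Measure (Fin s → M)) (hκ : ∀ s, IsProbabilityMeasure (κ s))
    (hexch : ∀ (s : ℕ) (σ : Equiv.Perm (Fin s)), (κ s).map (fun x => x ∘ σ) = κ s)
    (hconsis : ∀ s : ℕ, (κ (s+1)).map (fun x (j : Fin s) => x j.castSucc) = κ s)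
    (hlaw : ∀ n i, (P n).map (fun ω (l : Fin (r n i)) => Y n i l ω) = κ (r n i))
    -- Condition 1 (population part)
    (μ : M)
    (hμmin : ∀ w : M, (∫ x, dist μ (x 0) ^ 2 ∂(κ 1)) ≤ ∫ x, dist w (x 0) ^ 2 ∂(κ 1))
    (hμuniq : ∀ w : M, (∀ w' : M,
      (∫ x, dist w (x 0) ^ 2 ∂(κ 1)) ≤ ∫ x, dist w' (x 0) ^ 2 ∂(κ 1)) → w = μ)
    (hsep : ∀ ε : ℝ, 0 < ε → ∃ c : ℝ, (∫ x, dist μ (x 0) ^ 2 ∂(κ 1)) < c ∧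
      ∀ w : M, ε < dist w μ → c ≤ ∫ x, dist w (x 0) ^ 2 ∂(κ 1))
    -- Condition 1 (sample part)
    (μhat : (n : ℕ) → Ω n → M) (hμhatmeas : ∀ n, Measurable (μhat n))
    (hμhatmin : ∀ n (ω : Ω n) (w : M),
      (1 / ((∑ i, r n i : ℕ) : ℝ)) *
          ∑ i : Fin (m n), ∑ l : Fin (r n i), dist (μhat n ω) (Y n i l ω) ^ 2
        ≤ (1 / ((∑ i, r n i : ℕ) : ℝ)) *
            ∑ i : Fin (m n), ∑ l : Fin (r n i), dist w (Y n i l ω) ^ 2)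
    (hμhatuniq : ∀ n (ω : Ω n) (w : M), (∀ w' : M,
      (1 / ((∑ i, r n i : ℕ) : ℝ)) *
          ∑ i : Fin (m n), ∑ l : Fin (r n i), dist w (Y n i l ω) ^ 2
        ≤ (1 / ((∑ i, r n i : ℕ) : ℝ)) *
            ∑ i : Fin (m n), ∑ l : Fin (r n i), dist w' (Y n i l ω) ^ 2) → w = μhat n ω)
    -- consistency of the sample Fréchet mean (implied by Condition 1)
    (hμhatcons : ∀ ε : ℝ, 0 < ε →
      Tendsto (fun n => P n {ω : Ω n | ε ≤ dist (μhat n ω) μ}) atTop (nhds 0))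
    -- `a_r = lim Σ_i r_i² / N_j` exists
    (ar : ℝ)
    (har : Tendsto (fun n => (∑ i : Fin (m n), ((r n i : ℝ)) ^ 2) / ((∑ i, r n i : ℕ) : ℝ))
      atTop (nhds ar)) :
    -- conclusion: `σ̂_j²` is consistent for `σ_j²`
    ∀ ε : ℝ, 0 < ε →
      Tendsto (fun n => P n {ω : Ω n | ε ≤
        |((1 / ((∑ i, r n i : ℕ) : ℝ)) *
            ∑ i : Fin (m n),
              (∑ l : Fin (r n i), dist (μhat n ω) (Y n i l ω) ^ 2) ^ 2
          - ((∑ i : Fin (m n), ((r n i : ℝ)) ^ 2) / ((∑ i, r n i : ℕ) : ℝ)) *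
              ((1 / ((∑ i, r n i : ℕ) : ℝ)) *
                ∑ i : Fin (m n), ∑ l : Fin (r n i),
                  dist (μhat n ω) (Y n i l ω) ^ 2) ^ 2)
          - (cov (κ 1) (fun x => dist μ (x 0) ^ 2) (fun x => dist μ (x 0) ^ 2)
              + (ar - 1) *
                cov (κ 2) (fun x => dist μ (x 0) ^ 2) (fun x => dist μ (x 1) ^ 2))|})
        atTop (nhds 0) := by
  intro ε hε
  -- diameter bound
  obtain ⟨D₀, hD₀⟩ := Metric.isBounded_iff.mp hMbdd
  set D : ℝ := max D₀ 1 with hDdef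
  have hD1 : (1:ℝ) ≤ D := le_max_right _ _
  have hD0 : (0:ℝ) < D := lt_of_lt_of_le one_pos hD1
  have hdistD : ∀ x y : M, dist x y ≤ D :=
    fun x y => le_trans (hD₀ trivial trivial) (le_max_left _ _)
  -- `C₀ ≥ 1`
  obtain ⟨n₀, hn₀⟩ := (hN.eventually_ge_atTop 1).exists
  have hmn₀ : 0 < m n₀ := by
    rcases Nat.eq_zero_or_pos (m n₀) with h | h
    · exfalso
      have he : (Finset.univ : Finset (Fin (m n₀))) = ∅ := by
        apply Finset.univ_eq_empty_iff.mpr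
        rw [h]
        infer_instance
      rw [he, Finset.sum_empty] at hn₀
      omega
    · exact h
  have hC₀1 : 1 ≤ C₀ := le_trans (hr n₀ ⟨0, hmn₀⟩) (hrbdd n₀ ⟨0, hmn₀⟩)
  have hCr1 : (1:ℝ) ≤ (C₀ : ℝ) := by exact_mod_cast hC₀1
  have hCr0 : (0:ℝ) < (C₀ : ℝ) := lt_of_lt_of_le one_pos hCr1
  haveI hκ1 : IsProbabilityMeasure (κ 1) := hκ 1
  haveI hκ2 : IsProbabilityMeasure (κ 2) := hκ 2
  -- marginals
  have hmarg1 : ∀ (s : ℕ) (l : Fin s), (κ s).map (fun x => x l) = (κ 1).map (fun x => x 0) :=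
    marg_one κ hexch hconsis
  have hmarg2 : ∀ (s : ℕ) (l k : Fin s), l ≠ k →
      (κ s).map (fun x => (x l, x k)) = (κ 2).map (fun x => (x 0, x 1)) :=
    marg_two κ hexch hconsis
  -- the squared-distance function
  have hFmeas : Measurable (fun y : M => dist μ y ^ 2) :=
    ((continuous_const.dist continuous_id).pow 2).measurable
  have hFnn : ∀ y : M, 0 ≤ dist μ y ^ 2 := fun y => sq_nonneg _
  have hFle : ∀ y : M, dist μ y ^ 2 ≤ D ^ 2 :=
    fun y => pow_le_pow_left₀ dist_nonneg (hdistD μ y) 2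
  have hFb : ∀ y : M, |dist μ y ^ 2| ≤ D ^ 2 := fun y => by
    rw [abs_of_nonneg (hFnn y)]; exact hFle y
  -- population moments
  set m1 : ℝ := ∫ x, dist μ (x 0) ^ 2 ∂κ 1 with hm1def
  set M2v : ℝ := ∫ x, (dist μ (x 0) ^ 2) ^ 2 ∂κ 1 with hM2def
  set M11 : ℝ := ∫ x, dist μ (x 0) ^ 2 * dist μ (x 1) ^ 2 ∂κ 2 with hM11def
  have hm1nn : 0 ≤ m1 := integral_nonneg fun x => hFnn _
  have hm1le : m1 ≤ D ^ 2 := by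
    rw [hm1def]
    calc ∫ x, dist μ (x 0) ^ 2 ∂κ 1 ≤ ∫ _x, D ^ 2 ∂κ 1 :=
        integral_mono
          (integrable_of_bdd _ (hFmeas.comp (measurable_pi_apply 0)) (D ^ 2) (fun x => hFb _))
          (integrable_const _) (fun x => hFle _)
      _ = D ^ 2 := by simp
  -- the limit constant
  set Treal : ℝ := M2v + (ar - 1) * M11 - ar * m1 ^ 2 with hTrealdef
  have hcovT : cov (κ 1) (fun x => dist μ (x 0) ^ 2) (fun x => dist μ (x 0) ^ 2)
      + (ar - 1) * cov (κ 2) (fun x => dist μ (x 0) ^ 2) (fun x => dist μ (x 1) ^ 2)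
      = Treal := by
    have hX1 : Measurable (fun x : Fin 1 → M => dist μ (x 0) ^ 2) :=
      hFmeas.comp (measurable_pi_apply 0)
    have hX20 : Measurable (fun x : Fin 2 → M => dist μ (x 0) ^ 2) :=
      hFmeas.comp (measurable_pi_apply 0)
    have hX21 : Measurable (fun x : Fin 2 → M => dist μ (x 1) ^ 2) :=
      hFmeas.comp (measurable_pi_apply 1)
    have hc1 : cov (κ 1) (fun x => dist μ (x 0) ^ 2) (fun x => dist μ (x 0) ^ 2)
        = M2v - m1 * m1 := by
      rw [cov_eq (κ 1) _ _ hX1 hX1 (D ^ 2) (D ^ 2) (fun x => hFb _) (fun x => hFb _)]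
      have h1 : ∫ x, dist μ (x 0) ^ 2 * dist μ (x 0) ^ 2 ∂κ 1 = M2v := by
        rw [hM2def]
        exact integral_congr_ae (Filter.Eventually.of_forall fun x => by ring)
      rw [h1, ← hm1def]
    have h20 : ∫ x, dist μ (x 0) ^ 2 ∂κ 2 = m1 := by
      rw [hm1def]
      exact marg_one' κ hmarg1 2 0 (fun y => dist μ y ^ 2) hFmeas
    have h21 : ∫ x, dist μ (x 1) ^ 2 ∂κ 2 = m1 := by
      rw [hm1def]
      exact marg_one' κ hmarg1 2 1 (fun y => dist μ y ^ 2) hFmeas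
    have hc2 : cov (κ 2) (fun x => dist μ (x 0) ^ 2) (fun x => dist μ (x 1) ^ 2)
        = M11 - m1 * m1 := by
      rw [cov_eq (κ 2) _ _ hX20 hX21 (D ^ 2) (D ^ 2) (fun x => hFb _) (fun x => hFb _)]
      rw [← hM11def, h20, h21]
    rw [hc1, hc2, hTrealdef]
    ring
  rw [hcovT]
  -- constants
  set KV : ℝ := (C₀ : ℝ) * D ^ 2 with hKVdef
  set KA : ℝ := ((C₀ : ℝ) * D ^ 2) ^ 2 with hKAdef
  set KL : ℝ := 8 * (C₀ : ℝ) * D ^ 3 with hKLdef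
  set K₃ : ℝ := 2 * (C₀ : ℝ) * D ^ 2 with hK3def
  have hKL0 : 0 < KL := by
    rw [hKLdef]
    exact mul_pos (mul_pos (by norm_num) hCr0) (pow_pos hD0 3)
  have hK30 : 0 < K₃ := by
    rw [hK3def]
    exact mul_pos (mul_pos (by norm_num) hCr0) (pow_pos hD0 2)
  set ε1 : ℝ := ε / (4 * KL) with hε1def
  set cA : ℝ := ε / 4 with hcAdef
  set ε2 : ℝ := ε / (4 * K₃) with hε2def
  have hε1pos : 0 < ε1 := div_pos hε (by linarith)
  have hcApos : 0 < cA := by rw [hcAdef]; linarith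
  have hε2pos : 0 < ε2 := div_pos hε (by linarith)
  set cM : ℝ := |M11 - m1 ^ 2| with hcMdef
  set u : ℕ → ENNReal := fun n => P n {ω | ε1 ≤ dist (μhat n ω) μ}
    + (ENNReal.ofReal ((KA ^ 2 / ((∑ i, r n i : ℕ) : ℝ)) / cA ^ 2)
      + ENNReal.ofReal ((KV ^ 2 / ((∑ i, r n i : ℕ) : ℝ)) / ε2 ^ 2)) with hudef
  have hRtop : Tendsto (fun n => ((∑ i, r n i : ℕ) : ℝ)) atTop atTop :=
    tendsto_natCast_atTop_atTop.comp hN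
  have hu : Tendsto u atTop (nhds 0) := by
    have hA0 : Tendsto (fun n => (KA ^ 2 / ((∑ i, r n i : ℕ) : ℝ)) / cA ^ 2)
        atTop (nhds 0) := by
      have h := Tendsto.div_atTop (f := fun _ : ℕ => KA ^ 2)
        (g := fun n => ((∑ i, r n i : ℕ) : ℝ)) tendsto_const_nhds hRtop
      simpa using h.div_const (cA ^ 2)
    have hV0 : Tendsto (fun n => (KV ^ 2 / ((∑ i, r n i : ℕ) : ℝ)) / ε2 ^ 2)
        atTop (nhds 0) := by
      have h := Tendsto.div_atTop (f := fun _ : ℕ => KV ^ 2)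
        (g := fun n => ((∑ i, r n i : ℕ) : ℝ)) tendsto_const_nhds hRtop
      simpa using h.div_const (ε2 ^ 2)
    have h1 := hμhatcons ε1 hε1pos
    have h2 := (ENNReal.tendsto_ofReal hA0).add (ENNReal.tendsto_ofReal hV0)
    have h3 := h1.add h2
    simpa [hudef] using h3
  have hev1 : ∀ᶠ n in atTop, 1 ≤ ∑ i, r n i := hN.eventually_ge_atTop 1
  have hBtend : Tendsto (fun n =>
      |(∑ i : Fin (m n), ((r n i : ℝ)) ^ 2) / ((∑ i, r n i : ℕ) : ℝ) - ar| * cM)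
      atTop (nhds 0) := by
    have h := ((har.sub (tendsto_const_nhds (x := ar))).abs).mul_const cM
    simpa using h
  have hev2 : ∀ᶠ n in atTop,
      |(∑ i : Fin (m n), ((r n i : ℝ)) ^ 2) / ((∑ i, r n i : ℕ) : ℝ) - ar| * cM < ε / 4 :=
    hBtend.eventually_lt_const (by linarith)
  refine tendsto_of_tendsto_of_tendsto_of_le_of_le' tendsto_const_nhds hu
    (Eventually.of_forall fun n => zero_le) ?_
  filter_upwards [hev1, hev2] with n hn1 hen
  have hRn1 : (1:ℝ) ≤ ((∑ i, r n i : ℕ) : ℝ) := by exact_mod_cast hn1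
  have hRn0 : (0:ℝ) < ((∑ i, r n i : ℕ) : ℝ) := lt_of_lt_of_le one_pos hRn1
  have hmnle : ((m n : ℕ) : ℝ) ≤ ((∑ i, r n i : ℕ) : ℝ) := by
    have h : m n ≤ ∑ i, r n i := by
      calc m n = ∑ _i : Fin (m n), 1 := by simp
        _ ≤ ∑ i, r n i := Finset.sum_le_sum fun i _ => hr n i
    exact_mod_cast h
  have hcast : ((∑ i, r n i : ℕ) : ℝ) = ∑ i : Fin (m n), ((r n i : ℕ) : ℝ) := by
    push_cast
    rfl
  have hZmeas : ∀ i : Fin (m n), Measurable (fun ω (l : Fin (r n i)) => Y n i l ω) :=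
    fun i => measurable_pi_lambda _ (fun l => hYmeas n i l)
  have hSmeas : ∀ i, Measurable (fun ω => ∑ l : Fin (r n i), dist μ (Y n i l ω) ^ 2) :=
    fun i => Finset.measurable_sum _ (fun l _ => hFmeas.comp (hYmeas n i l))
  have hS0 : ∀ (i) (ω : Ω n), 0 ≤ ∑ l : Fin (r n i), dist μ (Y n i l ω) ^ 2 :=
    fun i ω => Finset.sum_nonneg fun l _ => hFnn _
  have hSU : ∀ (i) (ω : Ω n), (∑ l : Fin (r n i), dist μ (Y n i l ω) ^ 2)
      ≤ (r n i : ℝ) * D ^ 2 := fun i ω => by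
    calc (∑ l : Fin (r n i), dist μ (Y n i l ω) ^ 2)
        ≤ ∑ _l : Fin (r n i), D ^ 2 := Finset.sum_le_sum fun l _ => hFle _
      _ = (r n i : ℝ) * D ^ 2 := by simp [mul_comm]
  have hriC : ∀ i : Fin (m n), ((r n i : ℕ) : ℝ) ≤ (C₀ : ℝ) := fun i => by
    exact_mod_cast hrbdd n i
  have hSb : ∀ (i) (ω : Ω n), |∑ l : Fin (r n i), dist μ (Y n i l ω) ^ 2| ≤ KV := fun i ω => by
    rw [abs_of_nonneg (hS0 i ω), hKVdef]
    exact le_trans (hSU i ω) (mul_le_mul_of_nonneg_right (hriC i) (by positivity))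
  have hT2b : ∀ (i) (ω : Ω n), |(∑ l : Fin (r n i), dist μ (Y n i l ω) ^ 2) ^ 2| ≤ KA :=
    fun i ω => by
      rw [hKAdef, abs_of_nonneg (sq_nonneg _)]
      have hb := hSb i ω
      rw [abs_of_nonneg (hS0 i ω)] at hb
      calc (∑ l : Fin (r n i), dist μ (Y n i l ω) ^ 2) ^ 2 ≤ KV ^ 2 :=
          pow_le_pow_left₀ (hS0 i ω) hb 2
        _ = ((C₀ : ℝ) * D ^ 2) ^ 2 := by rw [hKVdef]
  have hind1 : ∀ i j : Fin (m n), i ≠ j →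
      IndepFun (fun ω => ∑ l : Fin (r n i), dist μ (Y n i l ω) ^ 2)
        (fun ω => ∑ l : Fin (r n j), dist μ (Y n j l ω) ^ 2) (P n) := by
    intro i j hij
    exact ((hindep n).comp (fun i (v : Fin (r n i) → M) => ∑ l, dist μ (v l) ^ 2)
      (fun i => Finset.measurable_sum _
        (fun l _ => hFmeas.comp (measurable_pi_apply l)))).indepFun hij
  have hind2 : ∀ i j : Fin (m n), i ≠ j →
      IndepFun (fun ω => (∑ l : Fin (r n i), dist μ (Y n i l ω) ^ 2) ^ 2)
        (fun ω => (∑ l : Fin (r n j), dist μ (Y n j l ω) ^ 2) ^ 2) (P n) := by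
    intro i j hij
    exact ((hindep n).comp (fun i (v : Fin (r n i) → M) => (∑ l, dist μ (v l) ^ 2) ^ 2)
      (fun i => (Finset.measurable_sum _
        (fun l _ => hFmeas.comp (measurable_pi_apply l))).pow_const 2)).indepFun hij
  have hmom : ∀ i : Fin (m n),
      (∫ ω, (∑ l : Fin (r n i), dist μ (Y n i l ω) ^ 2) ∂P n = (r n i : ℝ) * m1) ∧
      (∫ ω, (∑ l : Fin (r n i), dist μ (Y n i l ω) ^ 2) ^ 2 ∂P n
        = (r n i : ℝ) * M2v + ((r n i : ℝ) ^ 2 - (r n i : ℝ)) * M11) := by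
    intro i
    exact subject_moments (P n) κ hκ hmarg1 hmarg2 (r n i)
      (fun ω l => Y n i l ω) (hZmeas i) (hlaw n i)
      (fun y => dist μ y ^ 2) hFmeas (D ^ 2) hFb
  have hs0 : (∑ i : Fin (m n), ((r n i : ℕ) : ℝ)) ≠ 0 := by
    rw [← hcast]
    exact hRn0.ne'
  have hEA : ∫ x, (1 / ((∑ i, r n i : ℕ) : ℝ))
        * ∑ i : Fin (m n), (∑ l : Fin (r n i), dist μ (Y n i l x) ^ 2) ^ 2 ∂P n
      = M2v + ((∑ i : Fin (m n), ((r n i : ℝ)) ^ 2) / ((∑ i, r n i : ℕ) : ℝ) - 1) * M11 := by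
    rw [integral_const_mul]
    rw [integral_finset_sum _ (fun i _ =>
      integrable_of_bdd _ ((hSmeas i).pow_const 2) KA (hT2b i))]
    rw [Finset.sum_congr rfl (fun i _ => (hmom i).2)]
    rw [Finset.sum_add_distrib, ← Finset.sum_mul, ← Finset.sum_mul, Finset.sum_sub_distrib]
    rw [← hcast]
    rw [hcast]
    field_simp [hs0]
  have hEV : ∫ x, (1 / ((∑ i, r n i : ℕ) : ℝ))
        * ∑ i : Fin (m n), ∑ l : Fin (r n i), dist μ (Y n i l x) ^ 2 ∂P n = m1 := by
    rw [integral_const_mul]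
    rw [integral_finset_sum _ (fun i _ => integrable_of_bdd _ (hSmeas i) KV (hSb i))]
    rw [Finset.sum_congr rfl (fun i _ => (hmom i).1), ← Finset.sum_mul, hcast]
    rw [one_div, inv_mul_cancel_left₀ hs0]
  have hcheb2 : P n {ω | cA ≤ |(1 / ((∑ i, r n i : ℕ) : ℝ))
          * ∑ i : Fin (m n), (∑ l : Fin (r n i), dist μ (Y n i l ω) ^ 2) ^ 2
        - ∫ x, (1 / ((∑ i, r n i : ℕ) : ℝ))
          * ∑ i : Fin (m n), (∑ l : Fin (r n i), dist μ (Y n i l x) ^ 2) ^ 2 ∂P n|}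
      ≤ ENNReal.ofReal ((KA ^ 2 / ((∑ i, r n i : ℕ) : ℝ)) / cA ^ 2) :=
    cheb_avg (P n) (m n) (fun i ω => (∑ l : Fin (r n i), dist μ (Y n i l ω) ^ 2) ^ 2)
      (fun i => (hSmeas i).pow_const 2) KA hT2b hind2 cA hcApos _ hRn1 hmnle
  have hcheb3 : P n {ω | ε2 ≤ |(1 / ((∑ i, r n i : ℕ) : ℝ))
          * ∑ i : Fin (m n), ∑ l : Fin (r n i), dist μ (Y n i l ω) ^ 2
        - ∫ x, (1 / ((∑ i, r n i : ℕ) : ℝ))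
          * ∑ i : Fin (m n), ∑ l : Fin (r n i), dist μ (Y n i l x) ^ 2 ∂P n|}
      ≤ ENNReal.ofReal ((KV ^ 2 / ((∑ i, r n i : ℕ) : ℝ)) / ε2 ^ 2) :=
    cheb_avg (P n) (m n) (fun i ω => ∑ l : Fin (r n i), dist μ (Y n i l ω) ^ 2)
      (fun i => hSmeas i) KV hSb hind1 ε2 hε2pos _ hRn1 hmnle
  set E1 : Set (Ω n) := {ω | ε1 ≤ dist (μhat n ω) μ} with hE1def
  set E2 : Set (Ω n) := {ω | cA ≤ |(1 / ((∑ i, r n i : ℕ) : ℝ))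
          * ∑ i : Fin (m n), (∑ l : Fin (r n i), dist μ (Y n i l ω) ^ 2) ^ 2
        - ∫ x, (1 / ((∑ i, r n i : ℕ) : ℝ))
          * ∑ i : Fin (m n), (∑ l : Fin (r n i), dist μ (Y n i l x) ^ 2) ^ 2 ∂P n|} with hE2def
  set E3 : Set (Ω n) := {ω | ε2 ≤ |(1 / ((∑ i, r n i : ℕ) : ℝ))
          * ∑ i : Fin (m n), ∑ l : Fin (r n i), dist μ (Y n i l ω) ^ 2
        - ∫ x, (1 / ((∑ i, r n i : ℕ) : ℝ))
          * ∑ i : Fin (m n), ∑ l : Fin (r n i), dist μ (Y n i l x) ^ 2 ∂P n|} with hE3def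
  refine le_trans (measure_mono (?_ : _ ⊆ E1 ∪ (E2 ∪ E3))) ?_
  · intro ω hω
    simp only [Set.mem_setOf_eq] at hω
    by_contra hnot
    simp only [Set.mem_union, hE1def, hE2def, hE3def, Set.mem_setOf_eq, not_or, not_le] at hnot
    obtain ⟨h1, h2, h3⟩ := hnot
    have hab : ∀ i : Fin (m n),
        |(∑ l : Fin (r n i), dist (μhat n ω) (Y n i l ω) ^ 2)
          - ∑ l : Fin (r n i), dist μ (Y n i l ω) ^ 2|
        ≤ (r n i : ℝ) * (2 * D * dist (μhat n ω) μ) := by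
      intro i
      rw [← Finset.sum_sub_distrib]
      refine (Finset.abs_sum_le_sum_abs _ _).trans ?_
      calc ∑ l : Fin (r n i), |dist (μhat n ω) (Y n i l ω) ^ 2 - dist μ (Y n i l ω) ^ 2|
          ≤ ∑ _l : Fin (r n i), 2 * D * dist (μhat n ω) μ :=
            Finset.sum_le_sum fun l _ => sq_dist_diff _ _ _ D hdistD
        _ = (r n i : ℝ) * (2 * D * dist (μhat n ω) μ) := by simp [mul_comm]
    have haU : ∀ i : Fin (m n),
        (∑ l : Fin (r n i), dist (μhat n ω) (Y n i l ω) ^ 2) ≤ (r n i : ℝ) * D ^ 2 := by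
      intro i
      calc (∑ l : Fin (r n i), dist (μhat n ω) (Y n i l ω) ^ 2)
          ≤ ∑ _l : Fin (r n i), D ^ 2 :=
            Finset.sum_le_sum fun l _ => pow_le_pow_left₀ dist_nonneg (hdistD _ _) 2
        _ = (r n i : ℝ) * D ^ 2 := by simp [mul_comm]
    have hlip := lipschitz_step (m n) (r n) ((∑ i, r n i : ℕ) : ℝ) hRn1 hcast.symm
      ((C₀ : ℝ)) hCr1 hriC D (dist (μhat n ω) μ) hD1 dist_nonneg
      (fun i => ∑ l : Fin (r n i), dist (μhat n ω) (Y n i l ω) ^ 2)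
      (fun i => ∑ l : Fin (r n i), dist μ (Y n i l ω) ^ 2)
      hab (fun i => Finset.sum_nonneg fun l _ => sq_nonneg _) haU
      (fun i => hS0 i ω) (fun i => hSU i ω)
    have hlip' : |((1 / ((∑ i, r n i : ℕ) : ℝ)) *
            ∑ i : Fin (m n), (∑ l : Fin (r n i), dist (μhat n ω) (Y n i l ω) ^ 2) ^ 2
          - ((∑ i : Fin (m n), ((r n i : ℝ)) ^ 2) / ((∑ i, r n i : ℕ) : ℝ)) *
              ((1 / ((∑ i, r n i : ℕ) : ℝ)) * ∑ i : Fin (m n), ∑ l : Fin (r n i),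
                dist (μhat n ω) (Y n i l ω) ^ 2) ^ 2)
        - ((1 / ((∑ i, r n i : ℕ) : ℝ)) *
            ∑ i : Fin (m n), (∑ l : Fin (r n i), dist μ (Y n i l ω) ^ 2) ^ 2
          - ((∑ i : Fin (m n), ((r n i : ℝ)) ^ 2) / ((∑ i, r n i : ℕ) : ℝ)) *
              ((1 / ((∑ i, r n i : ℕ) : ℝ)) * ∑ i : Fin (m n), ∑ l : Fin (r n i),
                dist μ (Y n i l ω) ^ 2) ^ 2)|
        ≤ KL * dist (μhat n ω) μ := by
      rw [hKLdef]
      exact hlip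
    set XS : ℝ := (1 / ((∑ i, r n i : ℕ) : ℝ)) *
            ∑ i : Fin (m n), (∑ l : Fin (r n i), dist (μhat n ω) (Y n i l ω) ^ 2) ^ 2
          - ((∑ i : Fin (m n), ((r n i : ℝ)) ^ 2) / ((∑ i, r n i : ℕ) : ℝ)) *
              ((1 / ((∑ i, r n i : ℕ) : ℝ)) * ∑ i : Fin (m n), ∑ l : Fin (r n i),
                dist (μhat n ω) (Y n i l ω) ^ 2) ^ 2 with hXSdef
    set pA : ℝ := (1 / ((∑ i, r n i : ℕ) : ℝ))
        * ∑ i : Fin (m n), (∑ l : Fin (r n i), dist μ (Y n i l ω) ^ 2) ^ 2 with hpAdef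
    set pV : ℝ := (1 / ((∑ i, r n i : ℕ) : ℝ))
        * ∑ i : Fin (m n), ∑ l : Fin (r n i), dist μ (Y n i l ω) ^ 2 with hpVdef
    set Bq : ℝ := (∑ i : Fin (m n), ((r n i : ℝ)) ^ 2) / ((∑ i, r n i : ℕ) : ℝ) with hBqdef
    rw [hEA] at h2
    rw [hEV] at h3
    have hpV0 : 0 ≤ pV := by
      rw [hpVdef]
      exact mul_nonneg (by positivity) (Finset.sum_nonneg fun i _ => hS0 i ω)
    have hpVU : pV ≤ D ^ 2 := by
      rw [hpVdef]
      have hs : (∑ i : Fin (m n), ∑ l : Fin (r n i), dist μ (Y n i l ω) ^ 2)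
          ≤ ((∑ i, r n i : ℕ) : ℝ) * D ^ 2 := by
        rw [hcast, Finset.sum_mul]
        exact Finset.sum_le_sum fun i _ => hSU i ω
      calc (1 / ((∑ i, r n i : ℕ) : ℝ)) * ∑ i : Fin (m n), ∑ l : Fin (r n i),
              dist μ (Y n i l ω) ^ 2
          ≤ (1 / ((∑ i, r n i : ℕ) : ℝ)) * (((∑ i, r n i : ℕ) : ℝ) * D ^ 2) :=
            mul_le_mul_of_nonneg_left hs (by positivity)
        _ = D ^ 2 := by
            rw [one_div, inv_mul_cancel_left₀ hRn0.ne']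
    have hBq0 : 0 ≤ Bq := by
      rw [hBqdef]
      exact div_nonneg (Finset.sum_nonneg fun i _ => sq_nonneg _) hRn0.le
    have hBqC : Bq ≤ (C₀ : ℝ) := by
      rw [hBqdef, div_le_iff₀ hRn0, hcast, Finset.mul_sum]
      refine Finset.sum_le_sum fun i _ => ?_
      rw [sq]
      exact mul_le_mul_of_nonneg_right (hriC i) (Nat.cast_nonneg _)
    have hGT : pA - Bq * pV ^ 2 - Treal
        = (pA - (M2v + (Bq - 1) * M11)) + (Bq - ar) * (M11 - m1 ^ 2)
          - Bq * ((pV - m1) * (pV + m1)) := by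
      rw [hTrealdef]
      ring
    have habs2 : |pA - Bq * pV ^ 2 - Treal|
        ≤ |pA - (M2v + (Bq - 1) * M11)| + |Bq - ar| * cM
          + Bq * (|pV - m1| * |pV + m1|) := by
      rw [hGT]
      have t1 : |(pA - (M2v + (Bq - 1) * M11)) + (Bq - ar) * (M11 - m1 ^ 2)
          - Bq * ((pV - m1) * (pV + m1))|
          ≤ |(pA - (M2v + (Bq - 1) * M11)) + (Bq - ar) * (M11 - m1 ^ 2)|
            + |Bq * ((pV - m1) * (pV + m1))| := abs_sub _ _
      have t2 : |(pA - (M2v + (Bq - 1) * M11)) + (Bq - ar) * (M11 - m1 ^ 2)|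
          ≤ |pA - (M2v + (Bq - 1) * M11)| + |(Bq - ar) * (M11 - m1 ^ 2)| := abs_add_le _ _
      have t3 : |(Bq - ar) * (M11 - m1 ^ 2)| = |Bq - ar| * cM := by
        rw [abs_mul, hcMdef]
      have t4 : |Bq * ((pV - m1) * (pV + m1))| = Bq * (|pV - m1| * |pV + m1|) := by
        rw [abs_mul, abs_mul, abs_of_nonneg hBq0]
      rw [t3] at t2
      rw [t4] at t1
      linarith
    have hXsplit : XS - Treal = (XS - (pA - Bq * pV ^ 2)) + (pA - Bq * pV ^ 2 - Treal) := by
      ring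
    have habs1 : |XS - Treal| ≤ |XS - (pA - Bq * pV ^ 2)| + |pA - Bq * pV ^ 2 - Treal| := by
      rw [hXsplit]
      exact abs_add_le _ _
    have hKLd : KL * dist (μhat n ω) μ < KL * ε1 := mul_lt_mul_of_pos_left h1 hKL0
    have hKLε1 : KL * ε1 = ε / 4 := by
      rw [hε1def]
      field_simp
    have hprod : Bq * (|pV - m1| * |pV + m1|) ≤ (C₀ : ℝ) * (ε2 * (2 * D ^ 2)) := by
      apply mul_le_mul hBqC ?_ (mul_nonneg (abs_nonneg _) (abs_nonneg _)) hCr0.le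
      apply mul_le_mul (le_of_lt h3) ?_ (abs_nonneg _) hε2pos.le
      rw [abs_of_nonneg (by linarith : (0:ℝ) ≤ pV + m1)]
      linarith
    have hK3e : (C₀ : ℝ) * (ε2 * (2 * D ^ 2)) = ε / 4 := by
      rw [hε2def, hK3def]
      field_simp
    have hcAe : cA = ε / 4 := hcAdef
    linarith [habs1, hlip', habs2, hKLd, hen, h2, hω]
  · calc P n (E1 ∪ (E2 ∪ E3)) ≤ P n E1 + P n (E2 ∪ E3) := measure_union_le _ _
      _ ≤ P n E1 + (P n E2 + P n E3) := add_le_add le_rfl (measure_union_le _ _)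
      _ ≤ u n := by
          simp only [hudef]
          rw [hE1def]
          exact add_le_add le_rfl (add_le_add hcheb2 hcheb3)
end

section
/- (Massart's lemma for clustered Rademacher complexity.) Let x_{ij}, i = 1,…,n, j = 1,…,r_i, be fixed points, N = Σ_i r_i, and let F be a finite class of functions with sup_{x,f∈F} |f(x)| ≤ B. Then the empirical clustered Rademacher complexity satisfies E_ξ[ max_{f∈F} (1/N)·Σ_{i=1}^n ξ_i·Σ_{j=1}^{r_i} f(x_{ij}) ] ≤ (B/N)·√( 2·log|F|·Σ_{i=1}^n r_i² ), where ξ_1,…,ξ_n are i.i.d. Rademacher random variables. -/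
open MeasureTheory ProbabilityTheory Finset

/-- The Rademacher distribution on `ℝ`: `±1` with probability `1/2` each. -/
noncomputable def radMeasure : Measure ℝ :=
  (2 : ENNReal)⁻¹ • Measure.dirac (1 : ℝ) + (2 : ENNReal)⁻¹ • Measure.dirac (-1 : ℝ)

lemma radMeasure_integral {g : ℝ → ℝ} (hg : Measurable g) :
    ∫ y, g y ∂radMeasure = (g 1 + g (-1)) / 2 := by
  have hd : ∀ a : ℝ, Integrable g (Measure.dirac a) := fun a =>
    ⟨hg.aestronglyMeasurable, by simp [HasFiniteIntegral, lintegral_dirac]⟩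
  rw [radMeasure, integral_add_measure (((hd 1).smul_measure (by norm_num)))
      (((hd (-1)).smul_measure (by norm_num))),
    integral_smul_measure, integral_smul_measure, integral_dirac, integral_dirac]
  simp [ENNReal.toReal_inv]
  ring

lemma rad_mem_ae {Ω' : Type*} [MeasurableSpace Ω'] {P : Measure Ω'} {ξ : Ω' → ℝ}
    (hm : Measurable ξ) (hlaw : P.map ξ = radMeasure) :
    ∀ᵐ ω ∂P, |ξ ω| ≤ 1 := by
  have hms : MeasurableSet ({y : ℝ | |y| ≤ 1}ᶜ) :=
    ((measurableSet_le (measurable_abs) measurable_const)).compl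
  have h0 : P (ξ ⁻¹' {y : ℝ | |y| ≤ 1}ᶜ) = 0 := by
    rw [← Measure.map_apply hm hms, hlaw, radMeasure]
    simp [Measure.dirac_apply' _ hms, Set.indicator_apply]
  rw [ae_iff]
  convert h0 using 2
  rfl

lemma mgf_rad {Ω' : Type*} [MeasurableSpace Ω'] {P : Measure Ω'} {ξ : Ω' → ℝ}
    (hm : Measurable ξ) (hlaw : P.map ξ = radMeasure) (c t : ℝ) :
    mgf (fun ω => ξ ω * c) P t = Real.cosh (t * c) := by
  have hgm : Measurable fun y : ℝ => Real.exp (t * (y * c)) :=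
    ((measurable_id.mul_const c).const_mul t).exp
  calc mgf (fun ω => ξ ω * c) P t = ∫ ω, Real.exp (t * (ξ ω * c)) ∂P := rfl
    _ = ∫ y, Real.exp (t * (y * c)) ∂(P.map ξ) :=
        (integral_map hm.aemeasurable hgm.aestronglyMeasurable).symm
    _ = (Real.exp (t * (1 * c)) + Real.exp (t * (-1 * c))) / 2 := by
        rw [hlaw, radMeasure_integral hgm]
    _ = Real.cosh (t * c) := by rw [Real.cosh_eq]; ring_nf

set_option maxHeartbeats 1000000 in
lemma massart_core {Ω' : Type*} [MeasurableSpace Ω'] (P : Measure Ω') [IsProbabilityMeasure P]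
    {n : ℕ} {ξ : Fin n → Ω' → ℝ} (hξmeas : ∀ i, Measurable (ξ i))
    (hξlaw : ∀ i, P.map (ξ i) = radMeasure)
    (hξindep : iIndepFun ξ P)
    {α : Type*} (F : Finset α) (hF : F.Nonempty) (a : α → Fin n → ℝ)
    (S : ℝ) (hS : ∀ f ∈ F, ∑ i, (a f i) ^ 2 ≤ S) :
    ∫ ω, F.sup' hF (fun f => ∑ i, ξ i ω * a f i) ∂P
      ≤ Real.sqrt (2 * Real.log (F.card) * S) := by
  classical
  set L : ℝ := Real.log (F.card) with hLdef
  have hcard1 : (1 : ℝ) ≤ (F.card : ℝ) := by exact_mod_cast hF.card_pos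
  have hL0 : 0 ≤ L := Real.log_nonneg hcard1
  have hS0 : 0 ≤ S :=
    le_trans (Finset.sum_nonneg fun i _ => sq_nonneg _) (hS _ hF.choose_spec)
  set Z : α → Ω' → ℝ := fun f ω => ∑ i, ξ i ω * a f i with hZdef
  have hZm : ∀ f, Measurable (Z f) := fun f =>
    Finset.measurable_sum _ fun i _ => (hξmeas i).mul_const _
  have hsupm : Measurable (fun ω => F.sup' hF fun f => Z f ω) := by
    have h1 : Measurable (F.sup' hF Z) := Finset.measurable_sup' hF fun f _ => hZm f
    have h2 : (fun ω => F.sup' hF fun f => Z f ω) = F.sup' hF Z := by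
      funext ω; exact (Finset.sup'_apply hF Z ω).symm
    rw [h2]; exact h1
  set K : ℝ := F.sup' hF (fun f => ∑ i, |a f i|) with hKdef
  have habs : ∀ᵐ ω ∂P, ∀ i, |ξ i ω| ≤ 1 := by
    rw [ae_all_iff]; exact fun i => rad_mem_ae (hξmeas i) (hξlaw i)
  have hZb : ∀ᵐ ω ∂P, ∀ f ∈ F, |Z f ω| ≤ K := by
    filter_upwards [habs] with ω hω f hf
    calc |Z f ω| ≤ ∑ i, |ξ i ω * a f i| := Finset.abs_sum_le_sum_abs _ _
      _ ≤ ∑ i, |a f i| := by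
          refine Finset.sum_le_sum fun i _ => ?_
          rw [abs_mul]
          calc |ξ i ω| * |a f i| ≤ 1 * |a f i| :=
                mul_le_mul_of_nonneg_right (hω i) (abs_nonneg _)
            _ = |a f i| := one_mul _
      _ ≤ K := Finset.le_sup' (fun f => ∑ i, |a f i|) hf
  have hsupb : ∀ᵐ ω ∂P, |F.sup' hF fun f => Z f ω| ≤ K := by
    filter_upwards [hZb] with ω hω
    rw [abs_le]
    constructor
    · obtain ⟨f₀, hf₀⟩ := hF
      calc -K ≤ Z f₀ ω := by
            have := (abs_le.1 (hω f₀ hf₀)).1; linarith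
        _ ≤ _ := Finset.le_sup' (fun f => Z f ω) hf₀
    · exact Finset.sup'_le hF _ fun f hf => (abs_le.1 (hω f hf)).2
  have intg : ∀ (g : Ω' → ℝ) (C : ℝ), Measurable g → (∀ᵐ ω ∂P, |g ω| ≤ C) →
      Integrable g P := fun g C hm hb =>
    (integrable_const C).mono' hm.aestronglyMeasurable
      (by simpa [Real.norm_eq_abs] using hb)
  set I : ℝ := ∫ ω, F.sup' hF (fun f => Z f ω) ∂P with hIdef
  have key : ∀ t : ℝ, 0 < t → I ≤ L / t + t * S / 2 := by
    intro t ht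
    have hfi : Integrable (fun ω => F.sup' hF fun f => Z f ω) P := intg _ K hsupm hsupb
    have hexpm : Measurable (fun ω => Real.exp (t * F.sup' hF fun f => Z f ω)) :=
      (hsupm.const_mul t).exp
    have hexpb : ∀ᵐ ω ∂P, |Real.exp (t * F.sup' hF fun f => Z f ω)| ≤ Real.exp (t * K) := by
      filter_upwards [hsupb] with ω hω
      rw [abs_of_pos (Real.exp_pos _), Real.exp_le_exp]
      exact mul_le_mul_of_nonneg_left ((abs_le.1 hω).2) ht.le
    have hexpint : Integrable (fun ω => Real.exp (t * F.sup' hF fun f => Z f ω)) P :=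
      intg _ _ hexpm hexpb
    have jensen : Real.exp (t * I) ≤
        ∫ ω, Real.exp (t * F.sup' hF fun f => Z f ω) ∂P := by
      have hconv : ConvexOn ℝ Set.univ Real.exp := convexOn_exp
      have := hconv.map_integral_le (Real.continuous_exp.continuousOn) isClosed_univ
        (Filter.Eventually.of_forall fun ω => Set.mem_univ _)
        (hfi.const_mul t) (by exact hexpint)
      rw [integral_const_mul] at this
      exact this
    have hintf : ∀ f ∈ F, Integrable (fun ω => Real.exp (t * Z f ω)) P := by
      intro f hf
      refine intg _ (Real.exp (t * K)) ((hZm f).const_mul t).exp ?_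
      filter_upwards [hZb] with ω hω
      rw [abs_of_pos (Real.exp_pos _), Real.exp_le_exp]
      exact mul_le_mul_of_nonneg_left ((abs_le.1 (hω f hf)).2) ht.le
    have hpt : ∀ ω, Real.exp (t * F.sup' hF fun f => Z f ω) ≤
        ∑ f ∈ F, Real.exp (t * Z f ω) := by
      intro ω
      obtain ⟨f₀, hf₀, heq⟩ := F.exists_mem_eq_sup' hF (fun f => Z f ω)
      rw [heq]
      exact Finset.single_le_sum (f := fun f => Real.exp (t * Z f ω)) (fun f _ => (Real.exp_pos _).le) hf₀
    have step2 : ∫ ω, Real.exp (t * F.sup' hF fun f => Z f ω) ∂P ≤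
        ∑ f ∈ F, ∫ ω, Real.exp (t * Z f ω) ∂P := by
      calc _ ≤ ∫ ω, ∑ f ∈ F, Real.exp (t * Z f ω) ∂P :=
            integral_mono hexpint (integrable_finset_sum _ hintf)
              (fun ω => hpt ω)
        _ = _ := integral_finset_sum _ hintf
    have hmgf : ∀ f ∈ F, ∫ ω, Real.exp (t * Z f ω) ∂P ≤ Real.exp (t ^ 2 * S / 2) := by
      intro f hf
      have hindep' : iIndepFun
          (fun i => fun ω => ξ i ω * a f i) P :=
        hξindep.comp (fun i y => y * a f i) (fun i => measurable_mul_const _)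
      have hZeq : Z f = ∑ i : Fin n, (fun ω => ξ i ω * a f i) := by
        funext ω; simp [hZdef]
      have hm : ∫ ω, Real.exp (t * Z f ω) ∂P = mgf (Z f) P t := rfl
      rw [hm, hZeq, iIndepFun.mgf_sum hindep' (fun i => (hξmeas i).mul_const _) Finset.univ]
      calc ∏ i : Fin n, mgf (fun ω => ξ i ω * a f i) P t
          = ∏ i : Fin n, Real.cosh (t * a f i) :=
            Finset.prod_congr rfl fun i _ => mgf_rad (hξmeas i) (hξlaw i) _ _
        _ ≤ ∏ i : Fin n, Real.exp ((t * a f i) ^ 2 / 2) :=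
            Finset.prod_le_prod (fun i _ => (Real.cosh_pos _).le)
              (fun i _ => Real.cosh_le_exp_half_sq _)
        _ = Real.exp (∑ i : Fin n, (t * a f i) ^ 2 / 2) := (Real.exp_sum _ _).symm
        _ ≤ Real.exp (t ^ 2 * S / 2) := by
            rw [Real.exp_le_exp]
            have : ∑ i : Fin n, (t * a f i) ^ 2 / 2 = t ^ 2 / 2 * ∑ i, (a f i) ^ 2 := by
              rw [Finset.mul_sum]; exact Finset.sum_congr rfl fun i _ => by ring
            rw [this]
            calc t ^ 2 / 2 * ∑ i, (a f i) ^ 2 ≤ t ^ 2 / 2 * S :=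
                  mul_le_mul_of_nonneg_left (hS f hf) (by positivity)
              _ = t ^ 2 * S / 2 := by ring
    have final : Real.exp (t * I) ≤ (F.card : ℝ) * Real.exp (t ^ 2 * S / 2) := by
      calc Real.exp (t * I) ≤ _ := jensen
        _ ≤ ∑ f ∈ F, ∫ ω, Real.exp (t * Z f ω) ∂P := step2
        _ ≤ ∑ _f ∈ F, Real.exp (t ^ 2 * S / 2) := Finset.sum_le_sum hmgf
        _ = (F.card : ℝ) * Real.exp (t ^ 2 * S / 2) := by
            rw [Finset.sum_const, nsmul_eq_mul]
    have hlog : t * I ≤ L + t ^ 2 * S / 2 := by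
      have h1 := Real.log_le_log (Real.exp_pos _) final
      rw [Real.log_exp, Real.log_mul (by positivity) (Real.exp_ne_zero _),
        Real.log_exp] at h1
      exact h1
    have h2 : I ≤ (L + t ^ 2 * S / 2) / t := by
      rw [le_div_iff₀ ht]; linarith [hlog]
    calc I ≤ (L + t ^ 2 * S / 2) / t := h2
      _ = L / t + t * S / 2 := by field_simp
  -- optimization over t
  show I ≤ Real.sqrt (2 * L * S)
  rcases eq_or_lt_of_le hL0 with hL | hL
  · -- L = 0
    have : I ≤ 0 := by
      refine le_of_forall_pos_le_add fun ε hε => ?_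
      have ht : (0:ℝ) < 2 * ε / (S + 1) := by positivity
      have := key _ ht
      rw [← hL] at this
      have hb : 2 * ε / (S + 1) * S / 2 ≤ ε := by
        rw [show 2 * ε / (S + 1) * S / 2 = ε * (S / (S + 1)) by ring]
        have h1 : S / (S + 1) ≤ 1 := div_le_one_of_le₀ (by linarith) (by positivity)
        nlinarith
      simpa using this.trans (by simpa using hb)
    exact this.trans (Real.sqrt_nonneg _)
  · rcases eq_or_lt_of_le hS0 with hS' | hS'
    · -- S = 0
      have : I ≤ 0 := by
        refine le_of_forall_pos_le_add fun ε hε => ?_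
        have ht : (0:ℝ) < L / ε := by positivity
        have := key _ ht
        rw [← hS'] at this
        have hb : L / (L / ε) = ε := by field_simp
        simpa [hb] using this
      exact this.trans (Real.sqrt_nonneg _)
    · -- L > 0, S > 0
      set u : ℝ := Real.sqrt (2 * L * S) with hudef
      have hu2 : u ^ 2 = 2 * L * S := Real.sq_sqrt (by positivity)
      have hupos : 0 < u := Real.sqrt_pos.mpr (by positivity)
      have ht : (0:ℝ) < u / S := by positivity
      have := key _ ht
      have heq : L / (u / S) + (u / S) * S / 2 = u := by
        rw [div_div_eq_mul_div]
        field_simp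
        nlinarith [hu2]
      linarith [this, heq.le]

set_option maxHeartbeats 1000000 in
/-- **Massart's lemma for clustered Rademacher complexity.**
Let `x_{ij}` (`i = 1,…,n`, `j = 1,…,r_i`) be fixed points, `N = Σ_i r_i`, and `F` a finite
nonempty class of functions with `|f| ≤ B` everywhere.  If `ξ_1,…,ξ_n` are i.i.d. Rademacher
random variables (one common sign per cluster), then
`E_ξ[ max_{f∈F} (1/N) Σ_i ξ_i Σ_j f(x_{ij}) ] ≤ (B/N)·√(2 log|F| Σ_i r_i²)`. -/
theorem massart_clustered
    {Ω' : Type*} [MeasurableSpace Ω'] (P : Measure Ω') [IsProbabilityMeasure P]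
    {E : Type*} (n : ℕ) (r : Fin n → ℕ) (x : (i : Fin n) → Fin (r i) → E)
    (ξ : Fin n → Ω' → ℝ) (hξmeas : ∀ i, Measurable (ξ i))
    (hξlaw : ∀ i, P.map (ξ i) = radMeasure)
    (hξindep : iIndepFun ξ P)
    (F : Finset (E → ℝ)) (hF : F.Nonempty) (B : ℝ)
    (hB : ∀ f ∈ F, ∀ y : E, |f y| ≤ B) :
    (∫ ω, F.sup' hF
        (fun f => (1 / ((∑ i, r i : ℕ) : ℝ)) *
          ∑ i : Fin n, ξ i ω * ∑ j : Fin (r i), f (x i j)) ∂P)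
      ≤ (B / ((∑ i, r i : ℕ) : ℝ)) *
          Real.sqrt (2 * Real.log (F.card) * ∑ i : Fin n, ((r i : ℝ)) ^ 2) := by
  classical
  rcases Nat.eq_zero_or_pos (∑ i, r i) with hN0 | hNpos
  · rw [hN0]
    simp [Finset.sup'_const]
  · obtain ⟨i0, -, hi0⟩ : ∃ i ∈ Finset.univ, r i ≠ 0 :=
      Finset.exists_ne_zero_of_sum_ne_zero (by omega)
    set e : E := x i0 ⟨0, Nat.pos_of_ne_zero hi0⟩ with hedef
    have hB0 : 0 ≤ B := (abs_nonneg _).trans (hB hF.choose hF.choose_spec e)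
    set N : ℝ := ((∑ i, r i : ℕ) : ℝ) with hNdef
    have hN : 0 < N := by rw [hNdef]; exact_mod_cast hNpos
    set a : (E → ℝ) → Fin n → ℝ := fun f i => ∑ j : Fin (r i), f (x i j) with hadef
    have ha : ∀ f ∈ F, ∀ i, |a f i| ≤ B * r i := by
      intro f hf i
      calc |a f i| ≤ ∑ j : Fin (r i), |f (x i j)| := Finset.abs_sum_le_sum_abs _ _
        _ ≤ ∑ _j : Fin (r i), B := Finset.sum_le_sum fun j _ => hB f hf _
        _ = B * r i := by
            rw [Finset.sum_const, nsmul_eq_mul, Finset.card_univ, Fintype.card_fin]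
            ring
    have hSb : ∀ f ∈ F, ∑ i, a f i ^ 2 ≤ B ^ 2 * ∑ i, ((r i : ℝ)) ^ 2 := by
      intro f hf
      rw [Finset.mul_sum]
      refine Finset.sum_le_sum fun i _ => ?_
      have h := ha f hf i
      have h1 := (abs_le.1 h).1
      have h2 := (abs_le.1 h).2
      calc a f i ^ 2 ≤ (B * r i) ^ 2 := sq_le_sq' (by linarith) h2
        _ = B ^ 2 * ((r i : ℝ)) ^ 2 := by ring
    have core := massart_core P hξmeas hξlaw hξindep F hF a _ hSb
    have hsup : ∀ ω, (F.sup' hF fun f => (1 / N) * ∑ i, ξ i ω * a f i)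
        = (1 / N) * F.sup' hF fun f => ∑ i, ξ i ω * a f i := by
      intro ω
      exact (Finset.comp_sup'_eq_sup'_comp hF (fun y : ℝ => (1 / N) * y)
        (fun p q => by
          exact mul_max_of_nonneg p q (by positivity))).symm
    calc (∫ ω, F.sup' hF
        (fun f => (1 / N) * ∑ i : Fin n, ξ i ω * ∑ j : Fin (r i), f (x i j)) ∂P)
        = ∫ ω, (1 / N) * F.sup' hF (fun f => ∑ i, ξ i ω * a f i) ∂P := by
          exact integral_congr_ae (Filter.Eventually.of_forall fun ω => hsup ω)
      _ = (1 / N) * ∫ ω, F.sup' hF (fun f => ∑ i, ξ i ω * a f i) ∂P :=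
          integral_const_mul _ _
      _ ≤ (1 / N) * Real.sqrt (2 * Real.log (F.card) *
            (B ^ 2 * ∑ i, ((r i : ℝ)) ^ 2)) :=
          mul_le_mul_of_nonneg_left core (by positivity)
      _ = (B / N) * Real.sqrt (2 * Real.log (F.card) * ∑ i : Fin n, ((r i : ℝ)) ^ 2) := by
          rw [show 2 * Real.log (F.card) * (B ^ 2 * ∑ i, ((r i : ℝ)) ^ 2)
              = B ^ 2 * (2 * Real.log (F.card) * ∑ i, ((r i : ℝ)) ^ 2) by ring,
            Real.sqrt_mul (sq_nonneg B), Real.sqrt_sq hB0]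
          ring
end
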